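/- Let H, G be groups, let β : G × H → G be an action of H on G as group automorphisms (written g ◁ h), and let (H, G, α', β') be a matched pair (actions ▷', ◁'). The following are equivalent: (1) there exists a group isomorphism ψ : H ⋈' G → H ⋊_β G with ψ(h, 1_G) = (h, 1_G) for all h ∈ H; (2) there exists a pair (r, v) where r : G → H is a group homomorphism and v : G → G is a bijection such that v(g₁g₂) = (v(g₁) ◁ r(g₂))·v(g₂) for all g₁, g₂ ∈ G, and the actions α', β' are given by g ▷' h = r(g)·h·(r(v⁻¹(v(g) ◁ h)))⁻¹ and g ◁' h = v⁻¹(v(g) ◁ h) for all g ∈ G, h ∈ H. In this case the isomorphism is given by ψ(h, g) = (h r(g), v(g)). -/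

import Mathlib

/-- A matched pair of groups `(H, G, α, β)` in the sense of Takeuchi:
`act g h = g ▷ h` is a left action of the group `G` on the set `H`,
`coact g h = g ◁ h` is a right action of the group `H` on the set `G`, and the
two compatibility conditions hold. -/
structure IsMatchedPair {H G : Type*} [Group H] [Group G]
    (act : G → H → H) (coact : G → H → G) : Prop where
  one_act : ∀ h, act 1 h = h
  mul_act : ∀ g₁ g₂ h, act (g₁ * g₂) h = act g₁ (act g₂ h)
  coact_one : ∀ g, coact g 1 = g
  coact_mul : ∀ g h₁ h₂, coact g (h₁ * h₂) = coact (coact g h₁) h₂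
  act_mul : ∀ g h₁ h₂, act g (h₁ * h₂) = act g h₁ * act (coact g h₁) h₂
  mul_coact : ∀ g₁ g₂ h, coact (g₁ * g₂) h = coact g₁ (act g₂ h) * coact g₂ h

namespace IsMatchedPair

variable {H G : Type*} [Group H] [Group G] {act : G → H → H} {coact : G → H → G}

theorem act_one (mp : IsMatchedPair act coact) (g : G) : act g 1 = 1 := by
  have h := mp.act_mul g 1 1
  rw [mp.coact_one, one_mul] at h
  exact (left_eq_mul.mp h)

theorem one_coact (mp : IsMatchedPair act coact) (h : H) : coact 1 h = 1 := by
  have e := mp.mul_coact 1 1 h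
  rw [mp.one_act, one_mul] at e
  exact (left_eq_mul.mp e)

end IsMatchedPair

/-- The bicrossed product multiplication on the set `H × G`:
`(h₁, g₁) · (h₂, g₂) = (h₁ (g₁ ▷ h₂), (g₁ ◁ h₂) g₂)`. -/
def bicrossMul {H G : Type*} [Group H] [Group G] (act : G → H → H) (coact : G → H → G)
    (x y : H × G) : H × G :=
  (x.1 * act x.2 y.1, coact x.2 y.1 * y.2)


private lemma bicross_aux {H G : Type*} [Group H] [Group G]
    {coact : G → H → G} {act' : G → H → H} {coact' : G → H → G}
    (h1 : ∀ g : G, coact g 1 = g)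
    (h2 : ∀ (g : G) (h₁ h₂ : H), coact g (h₁ * h₂) = coact (coact g h₁) h₂)
    (r : G → H) (v : G ≃ G)
    (hr : ∀ g₁ g₂ : G, r (g₁ * g₂) = r g₁ * r g₂)
    (hv : ∀ g₁ g₂ : G, v (g₁ * g₂) = coact (v g₁) (r g₂) * v g₂)
    (hact : ∀ (g : G) (h : H), act' g h = r g * h * (r (v.symm (coact (v g) h)))⁻¹)
    (hcoact : ∀ (g : G) (h : H), coact' g h = v.symm (coact (v g) h)) :
    ((∀ x y : H × G,
          (fun x : H × G => (x.1 * r x.2, v x.2)) (bicrossMul act' coact' x y) =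
            bicrossMul (fun (_ : G) (h : H) => h) coact
              ((fun x : H × G => (x.1 * r x.2, v x.2)) x)
              ((fun x : H × G => (x.1 * r x.2, v x.2)) y)) ∧
        Function.Bijective (fun x : H × G => (x.1 * r x.2, v x.2)) ∧
        ∀ h : H, (fun x : H × G => (x.1 * r x.2, v x.2)) (h, 1) = (h, 1)) := by
  have hr1 : r 1 = 1 := by
    have := hr 1 1; rw [one_mul] at this; exact left_eq_mul.mp this
  have hv1 : v 1 = 1 := by
    have := hv 1 1; rw [one_mul, hr1, h1] at this
    exact left_eq_mul.mp this
  refine ⟨?_, ?_, ?_⟩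
  · intro x y
    simp only [bicrossMul, Prod.mk.injEq]
    constructor
    · rw [hr, hact, hcoact]
      group
    · simp only [hv, hcoact, Equiv.apply_symm_apply, h2]
  · rw [Function.bijective_iff_has_inverse]
    refine ⟨fun p => (p.1 * (r (v.symm p.2))⁻¹, v.symm p.2), fun x => ?_, fun p => ?_⟩
    · simp
    · simp
  · intro h
    simp [hr1, hv1]

/-- A bicrossed product `H ⋈' G` is isomorphic, by an isomorphism fixing `H`, to a
right semidirect product `H ⋊_β G` (for `β` an action of `H` on `G` as group
automorphisms) if and only if there is a pair `(r, v)` with `r : G → H` a group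
homomorphism and `v : G → G` a bijection with `v(g₁g₂) = (v(g₁) ◁ r(g₂))v(g₂)`
such that `g ▷' h = r(g)·h·(r(v⁻¹(v(g) ◁ h)))⁻¹` and `g ◁' h = v⁻¹(v(g) ◁ h)`;
in this case the isomorphism is `ψ(h, g) = (h r(g), v(g))`. -/
theorem bicross_iso_rightSemidirect_iff {H G : Type*} [Group H] [Group G]
    {coact : G → H → G} {act' : G → H → H} {coact' : G → H → G}
    (h1 : ∀ g : G, coact g 1 = g)
    (h2 : ∀ (g : G) (h₁ h₂ : H), coact g (h₁ * h₂) = coact (coact g h₁) h₂)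
    (h3 : ∀ (g₁ g₂ : G) (h : H), coact (g₁ * g₂) h = coact g₁ h * coact g₂ h)
    (mp' : IsMatchedPair act' coact') :
    ((∃ ψ : H × G → H × G,
        (∀ x y : H × G,
          ψ (bicrossMul act' coact' x y) =
            bicrossMul (fun (_ : G) (h : H) => h) coact (ψ x) (ψ y)) ∧
        Function.Bijective ψ ∧ ∀ h : H, ψ (h, 1) = (h, 1)) ↔
      (∃ (r : G → H) (v : G ≃ G),
        (∀ g₁ g₂ : G, r (g₁ * g₂) = r g₁ * r g₂) ∧
        (∀ g₁ g₂ : G, v (g₁ * g₂) = coact (v g₁) (r g₂) * v g₂) ∧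
        (∀ (g : G) (h : H), act' g h = r g * h * (r (v.symm (coact (v g) h)))⁻¹) ∧
        (∀ (g : G) (h : H), coact' g h = v.symm (coact (v g) h)))) ∧
    ∀ (r : G → H) (v : G ≃ G),
      (∀ g₁ g₂ : G, r (g₁ * g₂) = r g₁ * r g₂) →
      (∀ g₁ g₂ : G, v (g₁ * g₂) = coact (v g₁) (r g₂) * v g₂) →
      (∀ (g : G) (h : H), act' g h = r g * h * (r (v.symm (coact (v g) h)))⁻¹) →
      (∀ (g : G) (h : H), coact' g h = v.symm (coact (v g) h)) →
      ((∀ x y : H × G,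
          (fun x : H × G => (x.1 * r x.2, v x.2)) (bicrossMul act' coact' x y) =
            bicrossMul (fun (_ : G) (h : H) => h) coact
              ((fun x : H × G => (x.1 * r x.2, v x.2)) x)
              ((fun x : H × G => (x.1 * r x.2, v x.2)) y)) ∧
        Function.Bijective (fun x : H × G => (x.1 * r x.2, v x.2)) ∧
        ∀ h : H, (fun x : H × G => (x.1 * r x.2, v x.2)) (h, 1) = (h, 1)) := by
  constructor
  · constructor
    · rintro ⟨ψ, hmul, hbij, hfix⟩
      set r : G → H := fun g => (ψ (1, g)).1 with hrdef
      set vf : G → G := fun g => (ψ (1, g)).2 with hvdef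
      have coact1 : ∀ h : H, coact 1 h = 1 := by
        intro h
        have := h3 1 1 h; rw [one_mul] at this
        exact left_eq_mul.mp this
      have hpsi1 : ∀ g : G, ψ (1, g) = (r g, vf g) := fun g => rfl
      have hψ : ∀ (h : H) (g : G), ψ (h, g) = (h * r g, vf g) := by
        intro h g
        have key := hmul (h, 1) (1, g)
        simp only [bicrossMul, mp'.act_one, mp'.coact_one, mul_one, one_mul] at key
        rw [key, hfix, hpsi1]
        simp [bicrossMul, coact1]
      have hmulr : ∀ g₁ g₂ : G, ψ (1, g₁ * g₂) =
          (r g₁ * r g₂, coact (vf g₁) (r g₂) * vf g₂) := by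
        intro g₁ g₂
        have key := hmul (1, g₁) (1, g₂)
        simp only [bicrossMul, mp'.act_one, mp'.coact_one, mul_one, one_mul] at key
        rw [key, hpsi1, hpsi1]
      have hrmul : ∀ g₁ g₂ : G, r (g₁ * g₂) = r g₁ * r g₂ := by
        intro g₁ g₂
        have := hmulr g₁ g₂
        rw [hψ 1 (g₁ * g₂), one_mul] at this
        exact (Prod.ext_iff.mp this).1
      have hvmul : ∀ g₁ g₂ : G, vf (g₁ * g₂) = coact (vf g₁) (r g₂) * vf g₂ := by
        intro g₁ g₂
        have := hmulr g₁ g₂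
        rw [hψ 1 (g₁ * g₂)] at this
        exact (Prod.ext_iff.mp this).2
      have hvbij : Function.Bijective vf := by
        constructor
        · intro a b hab
          have h1' : ψ ((r a)⁻¹, a) = (1, vf a) := by rw [hψ]; simp
          have h2' : ψ ((r b)⁻¹, b) = (1, vf b) := by rw [hψ]; simp
          have := hbij.1 (h1'.trans (by rw [hab, ← h2']))
          exact (Prod.ext_iff.mp this).2
        · intro b
          obtain ⟨⟨h, g⟩, hg⟩ := hbij.2 (1, b)
          rw [hψ] at hg
          exact ⟨g, (Prod.ext_iff.mp hg).2⟩
      set v : G ≃ G := Equiv.ofBijective vf hvbij with hveq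
      have hvapp : ∀ g, v g = vf g := fun g => rfl
      have key2 : ∀ (g : G) (h : H),
          (act' g h * r (coact' g h), vf (coact' g h)) = (r g * h, coact (vf g) h) := by
        intro g h
        have key := hmul (1, g) (h, 1)
        simp only [bicrossMul, mul_one, one_mul] at key
        rw [hpsi1, hfix, hψ] at key
        simpa [bicrossMul] using key
      have hcoact' : ∀ (g : G) (h : H), coact' g h = v.symm (coact (v g) h) := by
        intro g h
        rw [Equiv.eq_symm_apply, hvapp, hvapp]
        exact (Prod.ext_iff.mp (key2 g h)).2
      refine ⟨r, v, hrmul, fun g₁ g₂ => by rw [hvapp, hvapp, hvapp]; exact hvmul g₁ g₂,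
        ?_, hcoact'⟩
      intro g h
      rw [← hcoact' g h]
      have h5 : act' g h * r (coact' g h) = r g * h := (Prod.ext_iff.mp (key2 g h)).1
      rw [← h5]
      group
    · rintro ⟨r, v, hr, hv, hact, hcoact⟩
      exact ⟨fun x : H × G => (x.1 * r x.2, v x.2),
        bicross_aux h1 h2 r v hr hv hact hcoact⟩
  · intro r v hr hv hact hcoact
    exact bicross_aux h1 h2 r v hr hv hact hcoact
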